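/- For every integer s ≥ 1 the polynomials t·P_{j−1}(t)·(1−t)^{s−j} for j = 1,…,s form a ℚ-basis of the s-dimensional ℚ-vector space { Q ∈ ℚ[t] : Q(0) = 0 and deg Q ≤ s }. In particular, for every Q ∈ tℚ[t] with deg Q ≤ s there are unique α_1,…,α_s ∈ ℚ with Q(t) = Σ_{j=1}^{s} α_j · t P_{j−1}(t) (1−t)^{s−j}. -/

import Mathlib

open Polynomial Finset

/-- The polynomial t·P_{s−1}(t) (for s ≥ 1), where P_{s−1} is the Eulerian polynomial:
it is defined by t·P_{s−1}(t) = (1−t)^s · Σ_{d≥1} d^{s−1} t^d; since this power series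
is a polynomial of degree ≤ s it is recovered by truncation at degree s. -/
noncomputable def tEuler (s : ℕ) : Polynomial ℚ :=
  PowerSeries.trunc (s + 1)
    ((1 - PowerSeries.X) ^ s * PowerSeries.mk fun d => if d = 0 then 0 else (d : ℚ) ^ (s - 1))

/-- The Eulerian polynomial P_k(t), obtained from t·P_k(t) by dividing by t. -/
noncomputable def eulerianPoly (k : ℕ) : Polynomial ℚ := (tEuler (k + 1)).divX

theorem findiff : ∀ (s : ℕ) (p : ℚ[X]), p.degree < s →
    ∀ x : ℚ, ∑ k ∈ Finset.range (s+1), (-1:ℚ)^k * (s.choose k) * p.eval (x - k) = 0 := by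
  intro s
  induction s with
  | zero =>
    intro p hp x
    have : p = 0 := by
      rw [← Polynomial.degree_eq_bot]
      exact Nat.WithBot.lt_zero_iff.mp (by exact_mod_cast hp)
    simp [this]
  | succ s ih =>
    intro p hp x
    by_cases hp0 : p = 0
    · simp [hp0]
    set q : ℚ[X] := p - p.comp (X - C 1) with hq
    have hmon : (X - C (1:ℚ)).Monic := Polynomial.monic_X_sub_C 1
    have hlc : p.leadingCoeff = (p.comp (X - C 1)).leadingCoeff := by
      have hn1 : ((X : ℚ[X]) - C 1).natDegree = 1 := Polynomial.natDegree_X_sub_C 1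
      rw [Polynomial.leadingCoeff_comp (by rw [hn1]; norm_num),
        hmon.leadingCoeff, one_pow, mul_one]
    have hc0 : p.comp (X - C 1) ≠ 0 := by
      intro h
      exact hp0 (Polynomial.leadingCoeff_eq_zero.mp (by rw [hlc, h, Polynomial.leadingCoeff_zero]))
    have hdc : (p.comp (X - C 1)).degree = p.degree := by
      rw [Polynomial.degree_eq_natDegree hc0, Polynomial.degree_eq_natDegree hp0,
        Polynomial.natDegree_comp, Polynomial.natDegree_X_sub_C, mul_one]
    have hqd : q.degree < p.degree := Polynomial.degree_sub_lt hdc.symm hp0 hlc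
    have hps : p.degree ≤ (s : ℕ) := by
      rw [Polynomial.degree_eq_natDegree hp0] at hp ⊢
      exact_mod_cast Nat.lt_succ_iff.mp (by exact_mod_cast hp)
    have hqs : q.degree < s := lt_of_lt_of_le hqd hps
    have IH := ih q hqs x
    have heq : ∀ y : ℚ, q.eval y = p.eval y - p.eval (y - 1) := by
      intro y; simp [hq, Polynomial.eval_comp]
    have h1 : ∀ k ∈ Finset.range (s+1),
        (-1:ℚ)^(k+1) * (((s+1).choose (k+1) : ℕ) : ℚ) * p.eval (x - ((k:ℚ)+1))
          = -((-1:ℚ)^k * (s.choose k) * p.eval ((x - k) - 1))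
            + ((-1:ℚ)^(k+1) * (s.choose (k+1)) * p.eval (x - ((k:ℚ)+1))) := by
      intro k _
      have hx : x - ((k:ℚ)+1) = (x - k) - 1 := by ring
      rw [Nat.choose_succ_succ, hx]
      push_cast
      ring
    have hC : ∑ k ∈ Finset.range (s+1), (-1:ℚ)^(k+1) * (s.choose (k+1)) * p.eval (x - ((k:ℚ)+1))
        = ∑ k ∈ Finset.range (s+1), (-1:ℚ)^k * (s.choose k) * p.eval (x - k) - p.eval x := by
      rw [Finset.sum_range_succ, Nat.choose_succ_self, Finset.sum_range_succ' _ s]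
      push_cast
      simp
      try ring
    calc ∑ k ∈ Finset.range (s+1+1), (-1:ℚ)^k * (((s+1).choose k : ℕ) : ℚ) * p.eval (x - k)
        = ∑ k ∈ Finset.range (s+1),
            (-1:ℚ)^(k+1) * (((s+1).choose (k+1) : ℕ) : ℚ) * p.eval (x - ((k:ℚ)+1)) + p.eval x := by
          rw [Finset.sum_range_succ' _ (s+1)]
          push_cast
          simp
          try ring
      _ = ∑ k ∈ Finset.range (s+1),
            (-((-1:ℚ)^k * (s.choose k) * p.eval ((x - k) - 1))
              + ((-1:ℚ)^(k+1) * (s.choose (k+1)) * p.eval (x - ((k:ℚ)+1)))) + p.eval x := by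
          rw [Finset.sum_congr rfl h1]
      _ = -∑ k ∈ Finset.range (s+1), (-1:ℚ)^k * (s.choose k) * p.eval ((x - k) - 1)
            + (∑ k ∈ Finset.range (s+1), (-1:ℚ)^k * (s.choose k) * p.eval (x - k) - p.eval x)
            + p.eval x := by
          rw [Finset.sum_add_distrib, Finset.sum_neg_distrib, hC]
      _ = ∑ k ∈ Finset.range (s+1), (-1:ℚ)^k * (s.choose k) * q.eval (x - k) := by
          rw [show (∑ k ∈ Finset.range (s+1), (-1:ℚ)^k * (s.choose k) * q.eval (x - k))
            = ∑ k ∈ Finset.range (s+1), ((-1:ℚ)^k * (s.choose k) * p.eval (x - k)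
                - (-1:ℚ)^k * (s.choose k) * p.eval ((x - k) - 1)) from
            Finset.sum_congr rfl fun k _ => by rw [heq]; ring]
          rw [Finset.sum_sub_distrib]
          ring
      _ = 0 := IH

theorem coeff_single (a : ℚ) (m j : ℕ) : (C a * X^m : ℚ[X]).coeff j = if m = j then a else 0 := by
  rw [Polynomial.C_mul_X_pow_eq_monomial, Polynomial.coeff_monomial]

theorem coeff_osxp (s k : ℕ) : ((1 - Polynomial.X : ℚ[X])^s).coeff k = (-1:ℚ)^k * s.choose k := by
  have hterm : ∀ m : ℕ, C ((-1:ℚ)^m * s.choose m) * X^m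
      = (-X : ℚ[X])^m * 1^(s-m) * (s.choose m : ℚ[X]) := by
    intro m
    rw [one_pow, mul_one, map_mul, map_pow, map_neg, map_one, Polynomial.C_eq_natCast, neg_pow]
    try ring
  have hexp : (1 - Polynomial.X : ℚ[X])^s
      = ∑ m ∈ Finset.range (s+1), C ((-1:ℚ)^m * s.choose m) * X^m := by
    rw [show (1 - Polynomial.X : ℚ[X]) = -X + 1 by ring, add_pow]
    exact Finset.sum_congr rfl fun m _ => (hterm m).symm
  rw [hexp, Polynomial.finset_sum_coeff]
  by_cases hk : k ≤ s
  · rw [Finset.sum_eq_single k]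
    · rw [coeff_single]; simp
    · intro m _ hm
      rw [coeff_single]; simp [hm]
    · intro h
      exact absurd (Finset.mem_range.mpr (Nat.lt_succ_of_le hk)) h
  · rw [Nat.choose_eq_zero_of_lt (by omega)]
    push_cast
    rw [mul_zero]
    refine Finset.sum_eq_zero fun m hm => ?_
    have h2 : m ≠ k := by simp at hm; omega
    rw [coeff_single]; simp [h2]

noncomputable def Sser (j : ℕ) : PowerSeries ℚ :=
  PowerSeries.mk fun d => if d = 0 then 0 else (d : ℚ) ^ j

theorem coe_osx : ((1 - Polynomial.X : ℚ[X]) : PowerSeries ℚ) = 1 - PowerSeries.X := by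
  rw [Polynomial.coe_sub, Polynomial.coe_one, Polynomial.coe_X]

theorem coeffF (s n : ℕ) (hs : 1 ≤ s) (hn : s < n) :
    PowerSeries.coeff n ((1 - PowerSeries.X) ^ s * Sser (s-1)) = 0 := by
  rw [show ((1:PowerSeries ℚ) - PowerSeries.X)^s = ((((1-Polynomial.X)^s : ℚ[X]) : PowerSeries ℚ)) by
    rw [Polynomial.coe_pow, coe_osx], PowerSeries.coeff_mul,
    Finset.Nat.sum_antidiagonal_eq_sum_range_succ_mk]
  have hres : ∀ k ∈ Finset.range (n+1), (k ∉ Finset.range (s+1)) →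
      (PowerSeries.coeff k ((((1 - Polynomial.X)^s : ℚ[X])) : PowerSeries ℚ)) *
        (PowerSeries.coeff (n - k) (Sser (s-1))) = 0 := by
    intro k _ hk
    rw [Polynomial.coeff_coe, coeff_osxp, Nat.choose_eq_zero_of_lt (by simp at hk; omega)]
    simp
  rw [← Finset.sum_subset (Finset.range_subset_range.mpr (by omega)) hres]
  have hmain := findiff s ((Polynomial.X : ℚ[X])^(s-1))
    (by rw [Polynomial.degree_X_pow]; exact_mod_cast Nat.sub_lt (by omega) one_pos) (n : ℚ)
  rw [← hmain]
  refine Finset.sum_congr rfl fun k hk => ?_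
  simp only [Finset.mem_range] at hk
  rw [Polynomial.coeff_coe, coeff_osxp, Sser, PowerSeries.coeff_mk]
  rw [if_neg (by omega)]
  rw [Polynomial.eval_pow, Polynomial.eval_X]
  rw [Nat.cast_sub (by omega)]

theorem tEuler_coe (s : ℕ) (hs : 1 ≤ s) :
    ((tEuler s : ℚ[X]) : PowerSeries ℚ) = (1 - PowerSeries.X)^s * Sser (s-1) := by
  ext n
  rw [Polynomial.coeff_coe, tEuler, PowerSeries.coeff_trunc]
  by_cases h : n < s + 1
  · rw [if_pos h]; rfl
  · rw [if_neg h, eq_comm]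
    exact coeffF s n hs (by omega)

theorem tEuler_coeff_zero (s : ℕ) : (tEuler s).coeff 0 = 0 := by
  rw [tEuler, PowerSeries.coeff_trunc, if_pos (by omega),
    PowerSeries.coeff_zero_eq_constantCoeff_apply, map_mul, PowerSeries.constantCoeff_mk]
  simp

theorem X_mul_eulerian (k : ℕ) : Polynomial.X * eulerianPoly k = tEuler (k+1) := by
  have := Polynomial.X_mul_divX_add (tEuler (k+1))
  rw [tEuler_coeff_zero, Polynomial.C_0, add_zero] at this
  exact this

theorem eulerian_coe (k : ℕ) :
    ((Polynomial.X * eulerianPoly k : ℚ[X]) : PowerSeries ℚ)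
      = (1 - PowerSeries.X)^(k+1) * Sser k := by
  rw [X_mul_eulerian, tEuler_coe (k+1) (by omega)]
  simp

theorem degree_tEuler_le (s : ℕ) : (tEuler s).degree ≤ (s : ℕ) := by
  refine Polynomial.degree_le_iff_coeff_zero _ _ |>.mpr fun m hm => ?_
  have hm' : s < m := by exact_mod_cast hm
  rw [tEuler, PowerSeries.coeff_trunc, if_neg (by omega)]

theorem eulerian_basis (s : ℕ) (hs : 1 ≤ s) :
    LinearIndependent ℚ (fun j : Fin s =>
      (Polynomial.X * eulerianPoly (j : ℕ) * (1 - Polynomial.X) ^ (s - 1 - (j : ℕ)) :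
        Polynomial ℚ)) ∧
    (∀ Q : Polynomial ℚ,
      (Q.coeff 0 = 0 ∧ Q.degree ≤ (s : ℕ)) ↔
        Q ∈ Submodule.span ℚ (Set.range fun j : Fin s =>
          (Polynomial.X * eulerianPoly (j : ℕ) * (1 - Polynomial.X) ^ (s - 1 - (j : ℕ)) :
            Polynomial ℚ))) ∧
    (∀ Q : Polynomial ℚ, Q.coeff 0 = 0 → Q.degree ≤ (s : ℕ) →
      ∃! α : Fin s → ℚ, Q = ∑ j,
        α j • (Polynomial.X * eulerianPoly (j : ℕ) * (1 - Polynomial.X) ^ (s - 1 - (j : ℕ)))) := by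
  set v : Fin s → ℚ[X] := fun j =>
    Polynomial.X * eulerianPoly (j : ℕ) * (1 - Polynomial.X) ^ (s - 1 - (j : ℕ)) with hv
  -- Linear independence
  have hli : LinearIndependent ℚ v := by
    rw [Fintype.linearIndependent_iff]
    intro g hg
    -- move to power series
    have h0 : Polynomial.coeToPowerSeries.ringHom (R := ℚ) (∑ j, g j • v j) = 0 := by
      rw [hg]; simp
    rw [map_sum] at h0
    have hterm : ∀ j : Fin s, Polynomial.coeToPowerSeries.ringHom (R := ℚ) (g j • v j)
        = (1 - PowerSeries.X)^s * (PowerSeries.C (g j) * Sser (j : ℕ)) := by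
      intro j
      have hj : (j : ℕ) < s := j.isLt
      rw [hv, Polynomial.smul_eq_C_mul, map_mul, map_mul]
      simp only [Polynomial.coeToPowerSeries.ringHom_apply]
      rw [Polynomial.coe_C, eulerian_coe, Polynomial.coe_pow, coe_osx]
      rw [show (1 - PowerSeries.X : PowerSeries ℚ)^s
        = (1 - PowerSeries.X)^((j:ℕ)+1) * (1 - PowerSeries.X)^(s-1-(j:ℕ)) by
          rw [← pow_add]; congr 1; omega]
      ring
    rw [Finset.sum_congr rfl (fun j _ => hterm j), ← Finset.mul_sum] at h0
    have hne : ((1 : PowerSeries ℚ) - PowerSeries.X)^s ≠ 0 := by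
      apply pow_ne_zero
      intro h
      have := congrArg (PowerSeries.constantCoeff) h
      simp at this
    have hT : (∑ j : Fin s, PowerSeries.C (g j) * Sser (j : ℕ)) = 0 :=
      (mul_eq_zero.mp h0).resolve_left hne
    -- coefficients give vanishing of a polynomial at all positive integers
    set q : ℚ[X] := ∑ j : Fin s, C (g j) * X^(j:ℕ) with hqdef
    have hroot : ∀ n : ℕ, q.eval (((n+1 : ℕ) : ℚ)) = 0 := by
      intro n
      have hc := congrArg (PowerSeries.coeff (n+1)) hT
      rw [map_sum, map_zero] at hc
      rw [hqdef, Polynomial.eval_finset_sum]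
      rw [← hc]
      refine Finset.sum_congr rfl fun j _ => ?_
      rw [PowerSeries.coeff_C_mul, Sser, PowerSeries.coeff_mk, if_neg (by omega)]
      simp
    have hq0 : q = 0 := by
      apply Polynomial.eq_zero_of_infinite_isRoot
      refine Set.infinite_of_injective_forall_mem
        (f := fun n : ℕ => ((n+1 : ℕ) : ℚ)) ?_ ?_
      · intro a b hab
        have h2 : ((a + 1 : ℕ) : ℚ) = ((b + 1 : ℕ) : ℚ) := hab
        have h3 : (a + 1 : ℕ) = (b + 1 : ℕ) := by exact_mod_cast h2
        omega
      · intro n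
        exact hroot n
    intro i
    have := congrArg (fun p : ℚ[X] => p.coeff (i : ℕ)) hq0
    simp only [hqdef, Polynomial.finset_sum_coeff, Polynomial.coeff_zero] at this
    rw [Finset.sum_eq_single i (fun j _ hj => by
        rw [coeff_single, if_neg (fun h => hj (Fin.ext h))])
      (fun h => absurd (Finset.mem_univ i) h)] at this
    rw [coeff_single, if_pos rfl] at this
    exact this
  -- the target submodule
  have hXne : (Polynomial.X : ℚ[X]) ≠ 0 := Polynomial.X_ne_zero
  have hinj : Function.Injective (LinearMap.mulLeft ℚ (Polynomial.X : ℚ[X])) :=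
    fun a b h => mul_left_cancel₀ hXne h
  set W : Submodule ℚ ℚ[X] :=
    Submodule.map (LinearMap.mulLeft ℚ (Polynomial.X : ℚ[X])) (Polynomial.degreeLT ℚ s) with hW
  have hWmem : ∀ Q : ℚ[X], Q ∈ W ↔ (Q.coeff 0 = 0 ∧ Q.degree ≤ (s : ℕ)) := by
    intro Q
    constructor
    · rintro ⟨p, hp, rfl⟩
      have hp' : p.degree < (s : ℕ) := Polynomial.mem_degreeLT.mp hp
      simp only [LinearMap.mulLeft_apply]
      constructor
      · rw [Polynomial.mul_coeff_zero, Polynomial.coeff_X_zero, zero_mul]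
      · by_cases hp0 : p = 0
        · simp [hp0]
        · refine (Polynomial.degree_mul_le _ _).trans ?_
          rw [Polynomial.degree_X, Polynomial.degree_eq_natDegree hp0]
          have : p.natDegree < s := by
            rw [Polynomial.degree_eq_natDegree hp0] at hp'
            exact_mod_cast hp'
          rw [show ((1 : WithBot ℕ) + (p.natDegree : ℕ)) = ((1 + p.natDegree : ℕ) : WithBot ℕ) by
            push_cast; rfl]
          exact_mod_cast (by omega : 1 + p.natDegree ≤ s)
    · rintro ⟨h0, hd⟩
      refine Submodule.mem_map.mpr ⟨Q.divX, ?_, ?_⟩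
      · rw [Polynomial.mem_degreeLT]
        rw [Polynomial.degree_lt_iff_coeff_zero]
        intro m hm
        have hm' : s ≤ m := by exact_mod_cast hm
        rw [Polynomial.coeff_divX]
        apply Polynomial.coeff_eq_zero_of_degree_lt
        exact lt_of_le_of_lt hd (by exact_mod_cast (by omega : s < m + 1))
      · rw [LinearMap.mulLeft_apply]
        have := Polynomial.X_mul_divX_add Q
        rw [h0, Polynomial.C_0, add_zero] at this
        exact this
  -- each basis vector lies in W
  have hvW : ∀ j : Fin s, v j ∈ W := by
    intro j
    rw [hWmem]
    have hj : (j : ℕ) < s := j.isLt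
    constructor
    · rw [hv]
      rw [Polynomial.mul_coeff_zero, Polynomial.mul_coeff_zero, Polynomial.coeff_X_zero,
        zero_mul, zero_mul]
    · rw [hv]
      have h1 : (Polynomial.X * eulerianPoly (j:ℕ)).degree ≤ ((((j:ℕ)+1 : ℕ)) : WithBot ℕ) := by
        rw [X_mul_eulerian]
        exact degree_tEuler_le _
      have h2 : ((1 - Polynomial.X : ℚ[X]) ^ (s - 1 - (j:ℕ))).degree
          ≤ (((s-1-(j:ℕ) : ℕ)) : WithBot ℕ) := by
        refine (Polynomial.degree_pow_le _ _).trans ?_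
        have : (1 - Polynomial.X : ℚ[X]).degree ≤ 1 := by
          refine (Polynomial.degree_sub_le _ _).trans ?_
          simp [Polynomial.degree_one, Polynomial.degree_X]
        calc ((s-1-(j:ℕ)) : ℕ) • (1 - Polynomial.X : ℚ[X]).degree
            ≤ ((s-1-(j:ℕ)) : ℕ) • (1 : WithBot ℕ) := nsmul_le_nsmul_right this _
          _ = ((s-1-(j:ℕ) : ℕ) : WithBot ℕ) := by
              rw [nsmul_eq_mul, mul_one]
      refine (Polynomial.degree_mul_le _ _).trans ?_
      refine le_trans (add_le_add h1 h2) ?_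
      rw [show (((j:ℕ)+1 : ℕ) : WithBot ℕ) + ((s-1-(j:ℕ) : ℕ) : WithBot ℕ)
        = ((((j:ℕ)+1) + (s-1-(j:ℕ)) : ℕ) : WithBot ℕ) by push_cast; rfl]
      exact_mod_cast (by omega : ((j:ℕ)+1) + (s-1-(j:ℕ)) ≤ s)
  -- dimensions
  haveI : FiniteDimensional ℚ (Polynomial.degreeLT ℚ s) :=
    LinearEquiv.finiteDimensional (Polynomial.degreeLTEquiv ℚ s).symm
  haveI : FiniteDimensional ℚ W := Module.Finite.map _ _
  have hfinW : Module.finrank ℚ W = s := by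
    rw [hW]
    rw [← LinearEquiv.finrank_eq
      (Submodule.equivMapOfInjective _ hinj (Polynomial.degreeLT ℚ s))]
    rw [LinearEquiv.finrank_eq (Polynomial.degreeLTEquiv ℚ s)]
    exact Module.finrank_fin_fun ℚ
  have hle : Submodule.span ℚ (Set.range v) ≤ W := by
    rw [Submodule.span_le]
    rintro _ ⟨j, rfl⟩
    exact hvW j
  have hspan : Submodule.span ℚ (Set.range v) = W := by
    apply Submodule.eq_of_le_of_finrank_le hle
    rw [hfinW, finrank_span_eq_card hli, Fintype.card_fin]
  refine ⟨hli, ?_, ?_⟩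
  · intro Q
    rw [← hWmem, ← hspan]
  · intro Q h0 hd
    have hQ : Q ∈ Submodule.span ℚ (Set.range v) := by
      rw [hspan, hWmem]; exact ⟨h0, hd⟩
    obtain ⟨c, hc⟩ := (Submodule.mem_span_range_iff_exists_fun ℚ).mp hQ
    refine ⟨c, hc.symm, ?_⟩
    intro y hy
    have hdiff : ∑ j, (y j - c j) • v j = 0 := by
      rw [Finset.sum_congr rfl (fun j _ => sub_smul (y j) (c j) (v j)),
        Finset.sum_sub_distrib, ← hy, hc]
      simp
    have := Fintype.linearIndependent_iff.mp hli (fun j => y j - c j) hdiff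
    funext i
    have hi := this i
    linarith
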